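/- For all integers p and q: y_{p,q} ▷ d = y_{p,q}, y_{p,q} ▷ c = y_{p,q+1}, and y_{p,q+m} = y_{p,q}. -/
import Mathlib


/-- A quandle as in the paper: a set with operations `▷` and `▷⁻¹` satisfying
axioms A1, A2, A3. -/
class PaperQuandle (Q : Type*) where
  rhd : Q → Q → Q
  rhdInv : Q → Q → Q
  fix : ∀ x : Q, rhd x x = x
  inv_rhd : ∀ x y : Q, rhdInv (rhd x y) y = x
  rhd_inv : ∀ x y : Q, rhd (rhdInv x y) y = x
  self_distrib : ∀ x y z : Q, rhd (rhd x y) z = rhd (rhd x z) (rhd y z)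

infixl:65 " ▷ " => PaperQuandle.rhd
infixl:65 " ▷⁻¹ " => PaperQuandle.rhdInv

/-- The point symmetry at `u`, as a permutation of `Q`: `x ↦ x ▷ u`,
with inverse `x ↦ x ▷⁻¹ u`. -/
def ptSym {Q : Type*} [PaperQuandle Q] (u : Q) : Equiv.Perm Q where
  toFun x := x ▷ u
  invFun x := x ▷⁻¹ u
  left_inv x := PaperQuandle.inv_rhd x u
  right_inv x := PaperQuandle.rhd_inv x u

/-- The element `y_{p,q} = d^{(ab)^t c^q}` if `p = 2t`, and
`d^{(ab)^t a c^q}` if `p = 2t+1`.  Here the word `ab` (apply `a`, then `b`)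
is the permutation `ptSym b * ptSym a`. -/
def Y {Q : Type*} [PaperQuandle Q] (a b c d : Q) (p q : ℤ) : Q :=
  if Even p then
    (ptSym c ^ q) (((ptSym b * ptSym a) ^ (p / 2)) d)
  else
    (ptSym c ^ q) ((((ptSym b * ptSym a) ^ ((p - 1) / 2)) d) ▷ a)



private lemma group_key {G : Type*} [Group G] (A B E F D C : G) (k : ℤ)
    (hA : A * A = 1) (hB : B * B = 1) (hE : E * E = 1) (hF : F * F = 1)
    (h1 : A * E * D = 1) (h2 : F * D * B = 1)
    (h3 : E * A * (B * A) ^ k * C = 1) :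
    Commute D (B * A) ∧ Commute D C ∧ D * A = A * D⁻¹ := by
  have hAi : A⁻¹ = A := inv_eq_of_mul_eq_one_right hA
  have hEi : E⁻¹ = E := inv_eq_of_mul_eq_one_right hE
  have hFi : F⁻¹ = F := inv_eq_of_mul_eq_one_right hF
  have hDi : D⁻¹ = A * E := inv_eq_of_mul_eq_one_left h1
  have hD : D = E * A := by
    have := congrArg (·⁻¹) hDi
    simpa [mul_inv_rev, hAi, hEi] using this
  have hBi : B⁻¹ = F * D := inv_eq_of_mul_eq_one_left h2
  have hBval : B = D⁻¹ * F := by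
    have := congrArg (·⁻¹) hBi
    simpa [mul_inv_rev, hFi] using this
  have hAD : A * D = D⁻¹ * A := by
    rw [hDi, hD, ← mul_assoc]
  have hDA : D * A = A * D⁻¹ := by
    calc D * A = D * (A * D) * D⁻¹ := by group
    _ = D * (D⁻¹ * A) * D⁻¹ := by rw [hAD]
    _ = A * D⁻¹ := by group
  have hFD : F * D = D⁻¹ * F := by
    have h := hB
    rw [hBval] at h
    have h' : (D⁻¹ * F)⁻¹ = D⁻¹ * F := inv_eq_of_mul_eq_one_left h
    calc F * D = (D⁻¹ * F)⁻¹ := by rw [mul_inv_rev, hFi, inv_inv]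
    _ = D⁻¹ * F := h'
  have hDB : D * B = B * D⁻¹ := by
    rw [hBval]
    calc D * (D⁻¹ * F) = F := by group
    _ = (F * D) * D⁻¹ := by group
    _ = (D⁻¹ * F) * D⁻¹ := by rw [hFD]
  have hcomm : Commute D (B * A) := by
    show D * (B * A) = (B * A) * D
    calc D * (B * A) = (D * B) * A := by rw [mul_assoc]
    _ = (B * D⁻¹) * A := by rw [hDB]
    _ = B * (D⁻¹ * A) := by rw [mul_assoc]
    _ = B * (A * D) := by rw [← hAD]
    _ = (B * A) * D := by rw [mul_assoc]
  refine ⟨hcomm, ?_, hDA⟩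
  have hCi : C⁻¹ = E * A * (B * A) ^ k := inv_eq_of_mul_eq_one_left h3
  have hCval : C = (B * A) ^ (-k) * D⁻¹ := by
    have := congrArg (·⁻¹) hCi
    simp only [inv_inv] at this
    rw [this, mul_inv_rev, mul_inv_rev, ← zpow_neg, hAi, hEi, ← hDi]
  rw [hCval]
  exact (hcomm.zpow_right (-k)).mul_right (Commute.refl D).inv_right

private lemma ptSym_apply' {Q : Type*} [PaperQuandle Q] (u x : Q) : ptSym u x = x ▷ u := rfl

theorem stmt_17
    {Q : Type*} [PaperQuandle Q] (k : ℤ) (m n : ℕ) (a b c d e f : Q)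
    (hk : 1 ≤ k) (hm : 0 < m) (hn : 0 < n)
    (rel_a : ∀ x : Q, x ▷ a ▷ a = x)
    (rel_b : ∀ x : Q, x ▷ b ▷ b = x)
    (rel_e : ∀ x : Q, x ▷ e ▷ e = x)
    (rel_f : ∀ x : Q, x ▷ f ▷ f = x)
    (rel_c : ∀ x : Q, (ptSym c ^ m) x = x)
    (rel_d : ∀ x : Q, (ptSym d ^ n) x = x)
    (rel_dea : ∀ x : Q, x ▷ d ▷ e ▷ a = x)
    (rel_bdf : ∀ x : Q, x ▷ b ▷ d ▷ f = x)
    (rel_cke : ∀ x : Q, (((ptSym b * ptSym a) ^ k) (x ▷ c)) ▷ a ▷ e = x)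
    (rel_fca : ∀ x : Q, (((ptSym b * ptSym a) ^ (k - 1)) (x ▷ f ▷ c)) ▷ a = x) :
    ∀ p q : ℤ, Y a b c d p q ▷ d = Y a b c d p q ∧
      Y a b c d p q ▷ c = Y a b c d p (q + 1) ∧
      Y a b c d p (q + (m : ℤ)) = Y a b c d p q := by
  have hA2 : ptSym a * ptSym a = 1 := Equiv.ext rel_a
  have hB2 : ptSym b * ptSym b = 1 := Equiv.ext rel_b
  have hE2 : ptSym e * ptSym e = 1 := Equiv.ext rel_e
  have hF2 : ptSym f * ptSym f = 1 := Equiv.ext rel_f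
  have hdea' : ptSym a * ptSym e * ptSym d = 1 := Equiv.ext rel_dea
  have hbdf' : ptSym f * ptSym d * ptSym b = 1 := Equiv.ext rel_bdf
  have hcke' : ptSym e * ptSym a * (ptSym b * ptSym a) ^ k * ptSym c = 1 :=
    Equiv.ext rel_cke
  obtain ⟨hcφ, hcC, hDA⟩ := group_key (ptSym a) (ptSym b) (ptSym e) (ptSym f)
    (ptSym d) (ptSym c) k hA2 hB2 hE2 hF2 hdea' hbdf' hcke'
  have hDd : ptSym d d = d := PaperQuandle.fix d
  have hDid : (ptSym d)⁻¹ d = d := by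
    rw [Equiv.Perm.inv_def, Equiv.symm_apply_eq, hDd]
  have hCm1 : ptSym c ^ (m : ℤ) = 1 := by
    rw [zpow_natCast]; exact Equiv.ext rel_c
  intro p q
  refine ⟨?_, ?_, ?_⟩
  · show ptSym d (Y a b c d p q) = Y a b c d p q
    unfold Y
    split_ifs with hp
    · set t : ℤ := p / 2
      have hc : Commute (ptSym d) (ptSym c ^ q * (ptSym b * ptSym a) ^ t) :=
        (hcC.zpow_right q).mul_right (hcφ.zpow_right t)
      calc ptSym d ((ptSym c ^ q) (((ptSym b * ptSym a) ^ t) d))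
          = (ptSym d * (ptSym c ^ q * (ptSym b * ptSym a) ^ t)) d := by
            simp [Equiv.Perm.mul_apply]
        _ = ((ptSym c ^ q * (ptSym b * ptSym a) ^ t) * ptSym d) d := by rw [hc.eq]
        _ = (ptSym c ^ q) (((ptSym b * ptSym a) ^ t) d) := by
            simp [Equiv.Perm.mul_apply, hDd]
    · set s : ℤ := (p - 1) / 2
      have hperm : ptSym d * (ptSym c ^ q * ptSym a * (ptSym b * ptSym a) ^ s) =
          (ptSym c ^ q * ptSym a * (ptSym b * ptSym a) ^ s) * (ptSym d)⁻¹ := by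
        calc ptSym d * (ptSym c ^ q * ptSym a * (ptSym b * ptSym a) ^ s)
            = (ptSym d * ptSym c ^ q) * (ptSym a * (ptSym b * ptSym a) ^ s) := by
              rw [mul_assoc, mul_assoc, ← mul_assoc]
          _ = (ptSym c ^ q * ptSym d) * (ptSym a * (ptSym b * ptSym a) ^ s) := by
              rw [(hcC.zpow_right q).eq]
          _ = ptSym c ^ q * ((ptSym d * ptSym a) * (ptSym b * ptSym a) ^ s) := by
              rw [mul_assoc, ← mul_assoc (ptSym d)]
          _ = ptSym c ^ q * ((ptSym a * (ptSym d)⁻¹) * (ptSym b * ptSym a) ^ s) := by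
              rw [hDA]
          _ = ptSym c ^ q * (ptSym a * ((ptSym d)⁻¹ * (ptSym b * ptSym a) ^ s)) := by
              rw [mul_assoc]
          _ = ptSym c ^ q * (ptSym a * ((ptSym b * ptSym a) ^ s * (ptSym d)⁻¹)) := by
              rw [((hcφ.zpow_right s).inv_left).eq]
          _ = (ptSym c ^ q * ptSym a * (ptSym b * ptSym a) ^ s) * (ptSym d)⁻¹ := by
              rw [mul_assoc, mul_assoc]
      calc ptSym d ((ptSym c ^ q) ((((ptSym b * ptSym a) ^ s) d) ▷ a))
          = (ptSym d * (ptSym c ^ q * ptSym a * (ptSym b * ptSym a) ^ s)) d := by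
            simp [Equiv.Perm.mul_apply, ptSym_apply']
        _ = ((ptSym c ^ q * ptSym a * (ptSym b * ptSym a) ^ s) * (ptSym d)⁻¹) d := by
            rw [hperm]
        _ = (ptSym c ^ q) ((((ptSym b * ptSym a) ^ s) d) ▷ a) := by
            simp [Equiv.Perm.mul_apply, hDid, ptSym_apply']
  · show ptSym c (Y a b c d p q) = Y a b c d p (q + 1)
    have hCsucc : ∀ x : Q, ptSym c ((ptSym c ^ q) x) = (ptSym c ^ (q + 1)) x := by
      intro x
      rw [← Equiv.Perm.mul_apply, zpow_add_one,
        ((Commute.refl (ptSym c)).zpow_right q).eq]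
    unfold Y
    split_ifs with hp
    · exact hCsucc _
    · exact hCsucc _
  · have hCq : ptSym c ^ (q + (m : ℤ)) = ptSym c ^ q := by
      rw [zpow_add, hCm1, mul_one]
    unfold Y
    split_ifs with hp
    · rw [hCq]
    · rw [hCq]
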